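/- Let ψ : [0,1] → ℝ be measurable with K(x,y) := ψ(|x−y|) integrable on [0,1]². Suppose f_n, f ∈ L²([0,1]) with 0 ≤ f_n ≤ 1 and 0 ≤ f ≤ 1 a.e., and f_n → f weakly in L². Then ∫∫ f_n(x) f_n(y) K(x,y) dx dy → ∫∫ f(x) f(y) K(x,y) dx dy. -/

import Mathlib

open MeasureTheory

namespace Stmt7

noncomputable abbrev μ₀ : Measure ℝ := (volume : Measure ℝ).restrict (Set.Icc (0:ℝ) 1)
noncomputable abbrev ν₀ : Measure (ℝ × ℝ) := μ₀.prod μ₀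

noncomputable section

abbrev Q01 : Set (ℝ × ℝ) := Set.Icc (0:ℝ) 1 ×ˢ Set.Icc (0:ℝ) 1

lemma measurableSet_Q01 : MeasurableSet Q01 := measurableSet_Icc.prod measurableSet_Icc

lemma isCompact_Q01 : IsCompact Q01 := isCompact_Icc.prod isCompact_Icc

instance : IsFiniteMeasure μ₀ :=
  ⟨by rw [Measure.restrict_apply_univ]; simp [Real.volume_Icc]⟩

lemma nu_eq : ν₀ = (volume : Measure (ℝ × ℝ)).restrict Q01 := by
  unfold ν₀ μ₀
  rw [Measure.volume_eq_prod, Measure.prod_restrict]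

lemma nu_univ : (ν₀ : Measure (ℝ × ℝ)) Set.univ = 1 := by
  rw [← Set.univ_prod_univ, Measure.prod_prod]
  simp [Measure.restrict_apply_univ, Real.volume_Icc]

lemma ae_fst {s : Set ℝ} (hs : MeasurableSet s) (h : ∀ᵐ x ∂μ₀, x ∈ s) :
    ∀ᵐ p ∂ν₀, p.1 ∈ s := by
  rw [ae_iff] at h ⊢
  have he : {p : ℝ × ℝ | ¬ p.1 ∈ s} = sᶜ ×ˢ Set.univ := by
    ext p; simp
  have hc : μ₀ sᶜ = 0 := by
    exact h
  rw [he, Measure.prod_prod, hc, zero_mul]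

lemma ae_snd {s : Set ℝ} (hs : MeasurableSet s) (h : ∀ᵐ x ∂μ₀, x ∈ s) :
    ∀ᵐ p ∂ν₀, p.2 ∈ s := by
  rw [ae_iff] at h ⊢
  have he : {p : ℝ × ℝ | ¬ p.2 ∈ s} = Set.univ ×ˢ sᶜ := by
    ext p; simp
  have hc : μ₀ sᶜ = 0 := by
    exact h
  rw [he, Measure.prod_prod, hc, mul_zero]

lemma ae_bd_fst {u : ℝ → ℝ} (hu : Measurable u)
    (hub : ∀ᵐ x ∂μ₀, u x ∈ Set.Icc (0:ℝ) 1) :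
    ∀ᵐ p ∂ν₀, |u p.1| ≤ 1 := by
  filter_upwards [ae_fst (s := u ⁻¹' Set.Icc (0:ℝ) 1) (hu measurableSet_Icc) hub] with p hp
  rw [abs_le]; exact ⟨le_trans (by norm_num) hp.1, hp.2⟩

lemma ae_bd_snd {u : ℝ → ℝ} (hu : Measurable u)
    (hub : ∀ᵐ x ∂μ₀, u x ∈ Set.Icc (0:ℝ) 1) :
    ∀ᵐ p ∂ν₀, |u p.2| ≤ 1 := by
  filter_upwards [ae_snd (s := u ⁻¹' Set.Icc (0:ℝ) 1) (hu measurableSet_Icc) hub] with p hp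
  rw [abs_le]; exact ⟨le_trans (by norm_num) hp.1, hp.2⟩

lemma int_aux {u v : ℝ → ℝ} {G : ℝ × ℝ → ℝ} (hu : Measurable u) (hv : Measurable v)
    (hub : ∀ᵐ x ∂μ₀, u x ∈ Set.Icc (0:ℝ) 1) (hvb : ∀ᵐ x ∂μ₀, v x ∈ Set.Icc (0:ℝ) 1)
    (hG : Integrable G ν₀) :
    Integrable (fun p : ℝ × ℝ => u p.1 * v p.2 * G p) ν₀ := by
  refine hG.norm.mono' ?_ ?_
  · exact (((hu.comp measurable_fst).mul
      (hv.comp measurable_snd)).aestronglyMeasurable).mul hG.1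
  · filter_upwards [ae_bd_fst hu hub, ae_bd_snd hv hvb] with p h1 h2
    have : ‖u p.1 * v p.2 * G p‖ = |u p.1| * |v p.2| * ‖G p‖ := by
      simp [Real.norm_eq_abs, abs_mul]
    rw [this]
    calc |u p.1| * |v p.2| * ‖G p‖ ≤ 1 * 1 * ‖G p‖ := by
          apply mul_le_mul_of_nonneg_right _ (norm_nonneg _)
          exact mul_le_mul h1 h2 (abs_nonneg _) zero_le_one
      _ = ‖G p‖ := by ring

lemma diff_bound {u v : ℝ → ℝ} {H G : ℝ × ℝ → ℝ} (hu : Measurable u) (hv : Measurable v)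
    (hub : ∀ᵐ x ∂μ₀, u x ∈ Set.Icc (0:ℝ) 1) (hvb : ∀ᵐ x ∂μ₀, v x ∈ Set.Icc (0:ℝ) 1)
    (hH : Integrable H ν₀) (hG : Integrable G ν₀) :
    |(∫ p, u p.1 * v p.2 * H p ∂ν₀) - ∫ p, u p.1 * v p.2 * G p ∂ν₀| ≤
      ∫ p, ‖H p - G p‖ ∂ν₀ := by
  rw [← integral_sub (int_aux hu hv hub hvb hH) (int_aux hu hv hub hvb hG),
    ← Real.norm_eq_abs]
  refine norm_integral_le_of_norm_le (hH.sub hG).norm ?_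
  filter_upwards [ae_bd_fst hu hub, ae_bd_snd hv hvb] with p h1 h2
  have he : u p.1 * v p.2 * H p - u p.1 * v p.2 * G p = u p.1 * v p.2 * (H p - G p) := by ring
  rw [he]
  have : ‖u p.1 * v p.2 * (H p - G p)‖ = |u p.1| * |v p.2| * ‖H p - G p‖ := by
    simp [Real.norm_eq_abs, abs_mul]
  rw [this]
  calc |u p.1| * |v p.2| * ‖H p - G p‖ ≤ 1 * 1 * ‖H p - G p‖ := by
        apply mul_le_mul_of_nonneg_right _ (norm_nonneg _)
        exact mul_le_mul h1 h2 (abs_nonneg _) zero_le_one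
    _ = ‖(H p - G p : ℝ)‖ := by ring
  -- note: ‖H p - G p‖ as value of (H - G)
  
/-- the "good kernel" property -/
def Good (f : ℕ → ℝ → ℝ) (flim : ℝ → ℝ) (G : ℝ × ℝ → ℝ) : Prop :=
  Integrable G ν₀ ∧
  Filter.Tendsto (fun n => ∫ p, f n p.1 * f n p.2 * G p ∂ν₀) Filter.atTop
    (nhds (∫ p, flim p.1 * flim p.2 * G p ∂ν₀))

def Pset : Set (ℝ × ℝ → ℝ) := {G | ∃ a b : C(ℝ, ℝ), G = fun p => a p.1 * b p.2}

def Vsub : Submodule ℝ (ℝ × ℝ → ℝ) := Submodule.span ℝ Pset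

lemma memℒp_cont (a : C(ℝ, ℝ)) : MemLp (fun x => a x) 2 μ₀ := by
  obtain ⟨C, hC⟩ := isCompact_Icc.exists_bound_of_continuousOn
    (a.continuous.continuousOn (s := Set.Icc (0:ℝ) 1))
  exact MemLp.of_bound a.continuous.measurable.aestronglyMeasurable C
    ((ae_restrict_mem measurableSet_Icc).mono fun x hx => hC x hx)

lemma good_prod (f : ℕ → ℝ → ℝ) (flim : ℝ → ℝ)
    (hweak : ∀ g : ℝ → ℝ, MemLp g 2 μ₀ →
      Filter.Tendsto (fun n => ∫ x in Set.Icc (0:ℝ) 1, f n x * g x)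
        Filter.atTop (nhds (∫ x in Set.Icc (0:ℝ) 1, flim x * g x)))
    (a b : C(ℝ, ℝ)) :
    Good f flim (fun p => a p.1 * b p.2) := by
  constructor
  · rw [nu_eq]
    exact ContinuousOn.integrableOn_compact isCompact_Q01
      (((a.continuous.comp continuous_fst).mul
        (b.continuous.comp continuous_snd)).continuousOn)
  · have key : ∀ u : ℝ → ℝ,
        (∫ p, u p.1 * u p.2 * (a p.1 * b p.2) ∂ν₀) =
          (∫ x, u x * a x ∂μ₀) * ∫ x, u x * b x ∂μ₀ := by
      intro u
      rw [show (fun p : ℝ × ℝ => u p.1 * u p.2 * (a p.1 * b p.2)) =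
          (fun p : ℝ × ℝ => (fun x => u x * a x) p.1 * (fun y => u y * b y) p.2) from
        funext fun p => by ring]
      exact integral_prod_mul (μ := μ₀) (ν := μ₀) (fun x => u x * a x) (fun y => u y * b y)
    have ha := hweak (fun x => a x) (memℒp_cont a)
    have hb := hweak (fun x => b x) (memℒp_cont b)
    have hmul := ha.mul hb
    rw [show (∫ p, flim p.1 * flim p.2 * (a p.1 * b p.2) ∂ν₀) =
      (∫ x, flim x * a x ∂μ₀) * ∫ x, flim x * b x ∂μ₀ from key flim]
    exact Filter.Tendsto.congr (fun n => (key (f n)).symm) hmul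

lemma good_span (f : ℕ → ℝ → ℝ) (flim : ℝ → ℝ)
    (hfmeas : ∀ n, Measurable (f n)) (hflimmeas : Measurable flim)
    (hfbd : ∀ n, ∀ᵐ x ∂μ₀, f n x ∈ Set.Icc (0:ℝ) 1)
    (hflimbd : ∀ᵐ x ∂μ₀, flim x ∈ Set.Icc (0:ℝ) 1)
    (hweak : ∀ g : ℝ → ℝ, MemLp g 2 μ₀ →
      Filter.Tendsto (fun n => ∫ x in Set.Icc (0:ℝ) 1, f n x * g x)
        Filter.atTop (nhds (∫ x in Set.Icc (0:ℝ) 1, flim x * g x)))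
    {G : ℝ × ℝ → ℝ} (hG : G ∈ Vsub) : Good f flim G := by
  refine Submodule.span_induction (p := fun G _ => Good f flim G) ?_ ?_ ?_ ?_ hG
  · rintro G ⟨a, b, rfl⟩
    exact good_prod f flim hweak a b
  · constructor
    · exact integrable_zero _ _ _
    · simp only [Pi.zero_apply, mul_zero, integral_zero]
      exact tendsto_const_nhds
  · rintro G H hGm hHm ⟨hGi, hGt⟩ ⟨hHi, hHt⟩
    refine ⟨hGi.add hHi, ?_⟩
    have key : ∀ u : ℝ → ℝ, Measurable u → (∀ᵐ x ∂μ₀, u x ∈ Set.Icc (0:ℝ) 1) →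
        (∫ p, u p.1 * u p.2 * (G + H) p ∂ν₀) =
          (∫ p, u p.1 * u p.2 * G p ∂ν₀) + ∫ p, u p.1 * u p.2 * H p ∂ν₀ := by
      intro u hu hub
      rw [← integral_add (int_aux hu hu hub hub hGi) (int_aux hu hu hub hub hHi)]
      exact integral_congr_ae (Filter.Eventually.of_forall fun p => by
        simp only [Pi.add_apply]; ring)
    rw [key flim hflimmeas hflimbd]
    exact Filter.Tendsto.congr (fun n => (key (f n) (hfmeas n) (hfbd n)).symm) (hGt.add hHt)
  · rintro c G hGm ⟨hGi, hGt⟩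
    refine ⟨hGi.smul c, ?_⟩
    have key : ∀ u : ℝ → ℝ,
        (∫ p, u p.1 * u p.2 * (c • G) p ∂ν₀) = c * ∫ p, u p.1 * u p.2 * G p ∂ν₀ := by
      intro u
      calc (∫ p, u p.1 * u p.2 * (c • G) p ∂ν₀)
          = ∫ p, c • (u p.1 * u p.2 * G p) ∂ν₀ :=
            integral_congr_ae (Filter.Eventually.of_forall fun p => by
              simp only [Pi.smul_apply, smul_eq_mul]; ring)
        _ = c • ∫ p, u p.1 * u p.2 * G p ∂ν₀ := integral_smul c _
        _ = c * ∫ p, u p.1 * u p.2 * G p ∂ν₀ := rfl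
    rw [key flim]
    exact Filter.Tendsto.congr (fun n => (key (f n)).symm) (hGt.const_mul c)

lemma pset_mul {G G' : ℝ × ℝ → ℝ} (hG : G ∈ Pset) (hG' : G' ∈ Pset) : G * G' ∈ Pset := by
  obtain ⟨a, b, rfl⟩ := hG; obtain ⟨a', b', rfl⟩ := hG'
  exact ⟨a * a', b * b', funext fun p => by
    simp only [Pi.mul_apply, ContinuousMap.mul_apply]; ring⟩

lemma vmul_left {G : ℝ × ℝ → ℝ} (hG : G ∈ Pset) {G' : ℝ × ℝ → ℝ} (hG' : G' ∈ Vsub) :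
    G * G' ∈ Vsub := by
  refine Submodule.span_induction (p := fun G' _ => G * G' ∈ Vsub) ?_ ?_ ?_ ?_ hG'
  · exact fun x hx => Submodule.subset_span (pset_mul hG hx)
  · show G * 0 ∈ Vsub; rw [mul_zero]; exact zero_mem _
  · exact fun x y hx hy px py => by
      show G * (x + y) ∈ Vsub; rw [mul_add]; exact add_mem px py
  · exact fun c x hx px => by
      show G * (c • x) ∈ Vsub; rw [mul_smul_comm]; exact Submodule.smul_mem _ _ px

lemma vmul {G G' : ℝ × ℝ → ℝ} (hG : G ∈ Vsub) (hG' : G' ∈ Vsub) : G * G' ∈ Vsub := by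
  refine Submodule.span_induction (p := fun G _ => G * G' ∈ Vsub) ?_ ?_ ?_ ?_ hG
  · exact fun x hx => vmul_left hx hG'
  · show (0 : ℝ × ℝ → ℝ) * G' ∈ Vsub; rw [zero_mul]; exact zero_mem _
  · exact fun x y hx hy px py => by
      show (x + y) * G' ∈ Vsub; rw [add_mul]; exact add_mem px py
  · exact fun c x hx px => by
      show (c • x) * G' ∈ Vsub; rw [smul_mul_assoc]; exact Submodule.smul_mem _ _ px

def fstQ : C(Q01, ℝ) := ⟨fun q => (q : ℝ × ℝ).1, continuous_fst.comp continuous_subtype_val⟩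
def sndQ : C(Q01, ℝ) := ⟨fun q => (q : ℝ × ℝ).2, continuous_snd.comp continuous_subtype_val⟩

lemma adjoin_corr {h : C(Q01, ℝ)}
    (hh : h ∈ Algebra.adjoin ℝ ({fstQ, sndQ} : Set C(Q01, ℝ))) :
    ∃ G ∈ Vsub, ∀ q : Q01, h q = G ↑q := by
  induction hh using Algebra.adjoin_induction with
  | mem x hx =>
    rcases hx with hx | hx
    · refine ⟨fun p => (ContinuousMap.id ℝ) p.1 * (ContinuousMap.const ℝ 1) p.2,
        Submodule.subset_span ⟨_, _, rfl⟩, fun q => ?_⟩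
      subst hx; simp [fstQ]
    · refine ⟨fun p => (ContinuousMap.const ℝ 1) p.1 * (ContinuousMap.id ℝ) p.2,
        Submodule.subset_span ⟨_, _, rfl⟩, fun q => ?_⟩
      rw [Set.mem_singleton_iff] at hx
      subst hx; simp [sndQ]
  | algebraMap r =>
    refine ⟨fun p => (ContinuousMap.const ℝ r) p.1 * (ContinuousMap.const ℝ 1) p.2,
      Submodule.subset_span ⟨_, _, rfl⟩, fun q => by simp⟩
  | add x y hx hy ihx ihy =>
    obtain ⟨G, hG, hGe⟩ := ihx; obtain ⟨G', hG', hG'e⟩ := ihy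
    exact ⟨G + G', add_mem hG hG', fun q => by
      simp only [ContinuousMap.add_apply, Pi.add_apply, hGe q, hG'e q]⟩
  | mul x y hx hy ihx ihy =>
    obtain ⟨G, hG, hGe⟩ := ihx; obtain ⟨G', hG', hG'e⟩ := ihy
    exact ⟨G * G', vmul hG hG', fun q => by
      simp only [ContinuousMap.mul_apply, Pi.mul_apply, hGe q, hG'e q]⟩

lemma v_integrable {G : ℝ × ℝ → ℝ} (hG : G ∈ Vsub) : Integrable G ν₀ := by
  refine Submodule.span_induction (p := fun G _ => Integrable G ν₀) ?_ ?_ ?_ ?_ hG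
  · rintro G ⟨a, b, rfl⟩
    rw [nu_eq]
    exact ContinuousOn.integrableOn_compact isCompact_Q01
      (((a.continuous.comp continuous_fst).mul
        (b.continuous.comp continuous_snd)).continuousOn)
  · exact integrable_zero _ _ _
  · exact fun x y hx hy px py => px.add py
  · exact fun c x hx px => px.smul c

lemma dense_V {K : ℝ × ℝ → ℝ} (hK : Integrable K ν₀) {ε : ℝ} (hε : 0 < ε) :
    ∃ G ∈ Vsub, (∫ p, ‖K p - G p‖ ∂ν₀) ≤ ε := by
  have hKQ : IntegrableOn K Q01 (volume : Measure (ℝ × ℝ)) := by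
    have := hK; rw [nu_eq] at this; exact this
  have hKind : Integrable (Q01.indicator K) (volume : Measure (ℝ × ℝ)) :=
    (integrable_indicator_iff measurableSet_Q01).mpr hKQ
  obtain ⟨g, gsupp, gL1, gcont, gint⟩ :=
    hKind.exists_hasCompactSupport_integral_sub_le (show (0:ℝ) < ε/3 by positivity)
  have hg_nu : Integrable g ν₀ := by rw [nu_eq]; exact gint.restrict
  have step1 : (∫ p, ‖K p - g p‖ ∂ν₀) ≤ ε / 3 := by
    have h1 : (∫ p, ‖K p - g p‖ ∂ν₀)
        = ∫ p, Q01.indicator (fun p => ‖K p - g p‖) p ∂(volume : Measure (ℝ × ℝ)) := by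
      rw [integral_indicator measurableSet_Q01, ← nu_eq]
    have hind_eq : Q01.indicator (fun p => ‖K p - g p‖)
        = Q01.indicator (fun p => ‖Q01.indicator K p - g p‖) := by
      funext p
      by_cases hp : p ∈ Q01
      · rw [Set.indicator_of_mem hp, Set.indicator_of_mem hp, Set.indicator_of_mem hp]
      · rw [Set.indicator_of_notMem hp, Set.indicator_of_notMem hp]
    have hint1 : Integrable (Q01.indicator (fun p => ‖K p - g p‖))
        (volume : Measure (ℝ × ℝ)) := by
      rw [hind_eq]
      exact ((hKind.sub gint).norm).indicator measurableSet_Q01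
    have h2 : ∀ p, Q01.indicator (fun p => ‖K p - g p‖) p ≤ ‖Q01.indicator K p - g p‖ := by
      intro p
      by_cases hp : p ∈ Q01
      · rw [Set.indicator_of_mem hp, Set.indicator_of_mem hp]
      · rw [Set.indicator_of_notMem hp]; exact norm_nonneg _
    rw [h1]
    exact le_trans (integral_mono hint1 ((hKind.sub gint).norm) h2) gL1
  have : CompactSpace Q01 := isCompact_iff_compactSpace.mp isCompact_Q01
  have hsep : (Algebra.adjoin ℝ ({fstQ, sndQ} : Set C(Q01, ℝ))).SeparatesPoints := by
    intro x y hxy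
    have hne : (x : ℝ × ℝ) ≠ y := fun h => hxy (Subtype.ext h)
    by_cases h1 : (x : ℝ × ℝ).1 = (y : ℝ × ℝ).1
    · have h2 : (x : ℝ × ℝ).2 ≠ (y : ℝ × ℝ).2 := fun h2 => hne (Prod.ext h1 h2)
      exact ⟨sndQ, ⟨sndQ, Algebra.subset_adjoin (by simp), rfl⟩, h2⟩
    · exact ⟨fstQ, ⟨fstQ, Algebra.subset_adjoin (by simp), rfl⟩, h1⟩
  have htop := ContinuousMap.subalgebra_topologicalClosure_eq_top_of_separatesPoints _ hsep
  set gX : C(Q01, ℝ) := ⟨fun q => g q, gcont.comp continuous_subtype_val⟩ with hgX_def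
  have hgX : gX ∈ closure ((Algebra.adjoin ℝ ({fstQ, sndQ} : Set C(Q01, ℝ))) :
      Set C(Q01, ℝ)) := by
    rw [← Subalgebra.topologicalClosure_coe, htop]
    trivial
  obtain ⟨h, hhA, hdist⟩ := Metric.mem_closure_iff.mp hgX (ε/3) (by positivity)
  obtain ⟨G, hGV, hGe⟩ := adjoin_corr hhA
  have hGint := v_integrable hGV
  have step2 : (∫ p, ‖g p - G p‖ ∂ν₀) ≤ ε / 3 := by
    have hb : ∀ᵐ p ∂ν₀, ‖g p - G p‖ ≤ ε/3 := by
      have hae : ∀ᵐ p ∂ν₀, p ∈ Q01 := by rw [nu_eq]; exact ae_restrict_mem measurableSet_Q01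
      filter_upwards [hae] with p hp
      have he := hGe ⟨p, hp⟩
      have hd : ‖g p - G p‖ = dist (gX ⟨p, hp⟩) (h ⟨p, hp⟩) := by
        rw [Real.dist_eq, he]
        rfl
      rw [hd]
      exact le_trans (ContinuousMap.dist_apply_le_dist _) hdist.le
    calc (∫ p, ‖g p - G p‖ ∂ν₀) ≤ ∫ _p, ε/3 ∂ν₀ :=
          integral_mono_ae ((hg_nu.sub hGint).norm) (integrable_const _) hb
      _ = ε/3 := by rw [integral_const, measureReal_def, nu_univ]; simp
  refine ⟨G, hGV, ?_⟩
  calc (∫ p, ‖K p - G p‖ ∂ν₀) ≤ ∫ p, (‖K p - g p‖ + ‖g p - G p‖) ∂ν₀ := by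
        refine integral_mono ((hK.sub hGint).norm)
          (((hK.sub hg_nu).norm).add ((hg_nu.sub hGint).norm)) ?_
        intro p
        have := dist_triangle (K p) (g p) (G p)
        simpa [dist_eq_norm] using this
    _ = (∫ p, ‖K p - g p‖ ∂ν₀) + ∫ p, ‖g p - G p‖ ∂ν₀ :=
        integral_add ((hK.sub hg_nu).norm) ((hg_nu.sub hGint).norm)
    _ ≤ ε/3 + ε/3 := add_le_add step1 step2
    _ ≤ ε := by linarith

end

end Stmt7

open Stmt7 in
/-- if the kernel `K(x,y) = ψ(|x-y|)` is integrable on `[0,1]²`,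
`0 ≤ fₙ, f ≤ 1` a.e. with `fₙ, f ∈ L²`, and `fₙ → f` weakly in `L²([0,1])`,
then the quadratic energies `∫∫ fₙ(x) fₙ(y) K(x,y)` converge to
`∫∫ f(x) f(y) K(x,y)`. -/
theorem stmt_7 (ψ : ℝ → ℝ) (hψmeas : Measurable ψ)
    (hK : Integrable (fun p : ℝ × ℝ => ψ (|p.1 - p.2|))
      (((volume : Measure ℝ).restrict (Set.Icc (0:ℝ) 1)).prod
        ((volume : Measure ℝ).restrict (Set.Icc (0:ℝ) 1))))
    (f : ℕ → ℝ → ℝ) (flim : ℝ → ℝ)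
    (hfmeas : ∀ n, Measurable (f n)) (hflimmeas : Measurable flim)
    (hfbd : ∀ n, ∀ᵐ x ∂((volume : Measure ℝ).restrict (Set.Icc (0:ℝ) 1)),
      f n x ∈ Set.Icc (0:ℝ) 1)
    (hflimbd : ∀ᵐ x ∂((volume : Measure ℝ).restrict (Set.Icc (0:ℝ) 1)),
      flim x ∈ Set.Icc (0:ℝ) 1)
    (hweak : ∀ g : ℝ → ℝ,
      MemLp g 2 ((volume : Measure ℝ).restrict (Set.Icc (0:ℝ) 1)) →
      Filter.Tendsto (fun n => ∫ x in Set.Icc (0:ℝ) 1, f n x * g x)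
        Filter.atTop (nhds (∫ x in Set.Icc (0:ℝ) 1, flim x * g x))) :
    Filter.Tendsto
      (fun n => ∫ x in Set.Icc (0:ℝ) 1, ∫ y in Set.Icc (0:ℝ) 1,
        f n x * f n y * ψ (|x - y|))
      Filter.atTop
      (nhds (∫ x in Set.Icc (0:ℝ) 1, ∫ y in Set.Icc (0:ℝ) 1,
        flim x * flim y * ψ (|x - y|))) := by
  have hK' : Integrable (fun p : ℝ × ℝ => ψ (|p.1 - p.2|)) ν₀ := hK
  have hint : ∀ u : ℝ → ℝ, Measurable u → (∀ᵐ x ∂μ₀, u x ∈ Set.Icc (0:ℝ) 1) →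
      Integrable (fun p : ℝ × ℝ => u p.1 * u p.2 * ψ (|p.1 - p.2|)) ν₀ :=
    fun u hu hub => int_aux hu hu hub hub hK'
  have iter_eq : ∀ u : ℝ → ℝ, Measurable u → (∀ᵐ x ∂μ₀, u x ∈ Set.Icc (0:ℝ) 1) →
      (∫ x in Set.Icc (0:ℝ) 1, ∫ y in Set.Icc (0:ℝ) 1, u x * u y * ψ (|x - y|)) =
        ∫ p, u p.1 * u p.2 * ψ (|p.1 - p.2|) ∂ν₀ :=
    fun u hu hub => (MeasureTheory.integral_prod _ (hint u hu hub)).symm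
  rw [show (fun n => ∫ x in Set.Icc (0:ℝ) 1, ∫ y in Set.Icc (0:ℝ) 1,
        f n x * f n y * ψ (|x - y|)) =
      fun n => ∫ p, f n p.1 * f n p.2 * ψ (|p.1 - p.2|) ∂ν₀ from
    funext fun n => iter_eq (f n) (hfmeas n) (hfbd n),
    iter_eq flim hflimmeas hflimbd]
  rw [Metric.tendsto_atTop]
  intro ε hε
  obtain ⟨G, hGV, hG1⟩ := dense_V hK' (show (0:ℝ) < ε/4 by positivity)
  have hGood := good_span f flim hfmeas hflimmeas hfbd hflimbd hweak hGV
  obtain ⟨N, hN⟩ := Metric.tendsto_atTop.mp hGood.2 (ε/4) (by positivity)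
  refine ⟨N, fun n hn => ?_⟩
  have h1 := diff_bound (hfmeas n) (hfmeas n) (hfbd n) (hfbd n) hK' hGood.1
  have h2 := diff_bound hflimmeas hflimmeas hflimbd hflimbd hK' hGood.1
  have h3 := hN n hn
  rw [Real.dist_eq] at h3 ⊢
  have e1 : |(∫ p, f n p.1 * f n p.2 * ψ (|p.1 - p.2|) ∂ν₀) -
      ∫ p, f n p.1 * f n p.2 * G p ∂ν₀| ≤ ε/4 := le_trans h1 hG1
  have e3 : |(∫ p, flim p.1 * flim p.2 * G p ∂ν₀) -
      ∫ p, flim p.1 * flim p.2 * ψ (|p.1 - p.2|) ∂ν₀| ≤ ε/4 := by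
    rw [abs_sub_comm]; exact le_trans h2 hG1
  have tri := abs_sub_le
    (∫ p, f n p.1 * f n p.2 * ψ (|p.1 - p.2|) ∂ν₀)
    (∫ p, f n p.1 * f n p.2 * G p ∂ν₀)
    (∫ p, flim p.1 * flim p.2 * ψ (|p.1 - p.2|) ∂ν₀)
  have tri2 := abs_sub_le
    (∫ p, f n p.1 * f n p.2 * G p ∂ν₀)
    (∫ p, flim p.1 * flim p.2 * G p ∂ν₀)
    (∫ p, flim p.1 * flim p.2 * ψ (|p.1 - p.2|) ∂ν₀)
  linarith
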